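/- arXiv:1811.04287 — 2 statements merged into one kernel-verified Lean document; each statement's English description precedes it below -/
import Mathlib

section
/- Let H be a graph, U ⊆ V(H), and t a positive integer. If the (U, t)-blow-up of H is T-free for a tree T with |T| = t, then the (U, s)-blow-up of H is T-free for every positive integer s. In particular, any copy of T in a (U, s)-blow-up uses vertices from at most t of the s copies of H. -/
def IsCopy {α β : Type*} (H : SimpleGraph α) (G : SimpleGraph β) (f : α ↪ β) : Prop :=
  ∀ a b, H.Adj a b → G.Adj (f a) (f b)

def HasCopy {α β : Type*} (H : SimpleGraph α) (G : SimpleGraph β) : Prop :=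
  ∃ f : α ↪ β, IsCopy H G f

def TFree {α β : Type*} (G : SimpleGraph β) (T : SimpleGraph α) : Prop := ¬ HasCopy T G

noncomputable def copyCount {α β : Type*} (H : SimpleGraph α) (G : SimpleGraph β) : ℕ :=
  Nat.card {f : α ↪ β // IsCopy H G f}

noncomputable def exNum {α γ : Type*} (n : ℕ) (H : SimpleGraph α) (T : SimpleGraph γ) : ℕ :=
  sSup {m | ∃ G : SimpleGraph (Fin n), TFree G T ∧ copyCount H G = m}

def bproj {α : Type*} (U : Set α) (t : ℕ) : (↥U ⊕ ↥(Uᶜ) × Fin t) → α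
  | Sum.inl u => u.1
  | Sum.inr p => p.1.1

def sameCopy {α : Type*} (U : Set α) (t : ℕ) :
    (↥U ⊕ ↥(Uᶜ) × Fin t) → (↥U ⊕ ↥(Uᶜ) × Fin t) → Prop
  | Sum.inr p, Sum.inr q => p.2 = q.2
  | _, _ => True

/-- The `(U, t)`-blow-up of `H`: `t` copies of `H` with the vertices of `U` identified. -/
def blowup {α : Type*} (H : SimpleGraph α) (U : Set α) (t : ℕ) :
    SimpleGraph (↥U ⊕ ↥(Uᶜ) × Fin t) where
  Adj x y := H.Adj (bproj U t x) (bproj U t y) ∧ sameCopy U t x y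
  symm := by
    constructor
    rintro x y ⟨h1, h2⟩
    refine ⟨h1.symm, ?_⟩
    cases x <;> cases y <;> simp_all [sameCopy, eq_comm]
  loopless := by
    constructor
    rintro x ⟨h1, _⟩
    exact (H.ne_of_adj h1) rfl

/-- If the `(U,t)`-blow-up of `H` is `T`-free for a tree `T` on `t` vertices, then the
`(U,s)`-blow-up is `T`-free for every `s ≥ 1`; in particular any copy of `T` in a
`(U,s)`-blow-up uses vertices from at most `t` of the `s` copies of `H`. -/
theorem stmt_1 {α γ : Type*} [Fintype γ] (H : SimpleGraph α) (U : Set α) (t : ℕ)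
    (ht : 0 < t) (T : SimpleGraph γ) (hTree : T.IsTree) (hcard : Fintype.card γ = t)
    (hfree : TFree (blowup H U t) T) :
    ∀ s : ℕ, 0 < s →
      TFree (blowup H U s) T ∧
      ∀ f : γ ↪ (↥U ⊕ ↥(Uᶜ) × Fin s), IsCopy T (blowup H U s) f →
        ∃ I : Finset (Fin s), I.card ≤ t ∧
          ∀ (x : γ) (w : ↥(Uᶜ)) (i : Fin s), f x = Sum.inr (w, i) → i ∈ I := by
  intro s hs
  have key : ∀ f : γ ↪ (↥U ⊕ ↥(Uᶜ) × Fin s), IsCopy T (blowup H U s) f →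
      ∃ I : Finset (Fin s), I.card ≤ t ∧
        ∀ (x : γ) (w : ↥(Uᶜ)) (i : Fin s), f x = Sum.inr (w, i) → i ∈ I := by
    intro f hf
    classical
    -- index function
    let idx : (↥U ⊕ ↥(Uᶜ) × Fin s) → Fin s := fun v =>
      match v with
      | Sum.inl _ => ⟨0, hs⟩
      | Sum.inr p => p.2
    refine ⟨Finset.univ.image (fun x => idx (f x)), ?_, ?_⟩
    · calc (Finset.univ.image (fun x => idx (f x))).card
          ≤ Finset.univ.card := Finset.card_image_le
        _ = t := by rw [Finset.card_univ, hcard]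
    · intro x w i hx
      have : idx (f x) = i := by rw [hx]
      rw [← this]
      exact Finset.mem_image_of_mem _ (Finset.mem_univ x)
  refine ⟨?_, key⟩
  rintro ⟨f, hf⟩
  classical
  obtain ⟨I, hIcard, hI⟩ := key f hf
  -- injection from I into Fin t
  have : Nonempty (↥I ↪ Fin t) := by
    apply Function.Embedding.nonempty_of_card_le
    simpa using hIcard
  obtain ⟨ι⟩ := this
  have hι : Function.Injective ι := ι.injective
  let j : Fin s → Fin t := fun i => if h : i ∈ I then ι ⟨i, h⟩ else ⟨0, ht⟩
  let g : γ → (↥U ⊕ ↥(Uᶜ) × Fin t) := fun x =>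
    match f x with
    | Sum.inl u => Sum.inl u
    | Sum.inr p => Sum.inr (p.1, j p.2)
  have hmem : ∀ (x : γ) (w : ↥(Uᶜ)) (i : Fin s), f x = Sum.inr (w, i) → i ∈ I := hI
  have hginj : Function.Injective g := by
    intro x y hxy
    apply f.injective
    simp only [g] at hxy
    cases hfx : f x with
    | inl u => cases hfy : f y with
      | inl v => rw [hfx, hfy] at hxy; simpa using hxy
      | inr q => rw [hfx, hfy] at hxy; simp at hxy
    | inr p => cases hfy : f y with
      | inl v => rw [hfx, hfy] at hxy; simp at hxy
      | inr q =>
        rw [hfx, hfy] at hxy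
        simp only [Sum.inr.injEq, Prod.mk.injEq] at hxy
        obtain ⟨h1, h2⟩ := hxy
        have hp : p.2 ∈ I := hmem x p.1 p.2 (by rw [hfx])
        have hq : q.2 ∈ I := hmem y q.1 q.2 (by rw [hfy])
        simp only [j, dif_pos hp, dif_pos hq] at h2
        have h3 := Subtype.ext_iff.mp (hι h2)
        simp only [Sum.inr.injEq]
        exact Prod.ext h1 h3
  apply hfree
  refine ⟨⟨g, hginj⟩, ?_⟩
  intro a b hab
  have hadj := hf a b hab
  obtain ⟨h1, h2⟩ := hadj
  constructor
  · -- bproj preserved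
    simp only [Function.Embedding.coeFn_mk, g]
    cases hfa : f a with
    | inl u => cases hfb : f b with
      | inl v => rw [hfa, hfb] at h1; exact h1
      | inr q => rw [hfa, hfb] at h1; exact h1
    | inr p => cases hfb : f b with
      | inl v => rw [hfa, hfb] at h1; exact h1
      | inr q => rw [hfa, hfb] at h1; exact h1
  · simp only [Function.Embedding.coeFn_mk, g]
    cases hfa : f a with
    | inl u => cases hfb : f b with
      | inl v => trivial
      | inr q => trivial
    | inr p => cases hfb : f b with
      | inl v => trivial
      | inr q =>
        rw [hfa, hfb] at h2
        show j p.2 = j q.2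
        simp only [sameCopy] at h2
        rw [h2]
end

section
/- Let D be a finite directed graph, P its partition into strongly connected components, and let A ⊆ V(D) satisfy: every vertex is reachable from A, |A| is minimal among such sets, and among these A maximizes Σ_{u∈A}(number of vertices reachable from u). Let W be the union of the parts of P containing a vertex of A, and U = V(D) \ W. Then there are no directed edges between distinct parts of P that are both contained in W, and there are no directed edges from U to W. -/
/-- With `A` as in the previous statement, `W` the union of the strongly connected components
meeting `A`, and `U = V ∖ W`: there are no edges between distinct components inside `W`, and
no edges from `U` to `W`. -/
theorem stmt_6 {V : Type*} [Fintype V] (D : V → V → Prop) (A : Finset V)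
    (hreach : ∀ v, ∃ a ∈ A, Relation.ReflTransGen D a v)
    (hmin : ∀ B : Finset V, (∀ v, ∃ a ∈ B, Relation.ReflTransGen D a v) → A.card ≤ B.card)
    (hmax : ∀ B : Finset V, (∀ v, ∃ a ∈ B, Relation.ReflTransGen D a v) → B.card = A.card →
      ∑ u ∈ B, Set.ncard {v | Relation.ReflTransGen D u v} ≤
        ∑ u ∈ A, Set.ncard {v | Relation.ReflTransGen D u v})
    (W : Set V)
    (hW : W = {v | ∃ a ∈ A, Relation.ReflTransGen D a v ∧ Relation.ReflTransGen D v a}) :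
    (∀ x ∈ W, ∀ y ∈ W, D x y →
      Relation.ReflTransGen D x y ∧ Relation.ReflTransGen D y x) ∧
    (∀ x, x ∉ W → ∀ y ∈ W, ¬ D x y) := by
  classical
  have key : ∀ a ∈ A, ∀ b ∈ A, Relation.ReflTransGen D a b → a = b := by
    intro a ha b hb hab
    by_contra hne
    classical
    have hcov : ∀ v, ∃ c ∈ A.erase b, Relation.ReflTransGen D c v := by
      intro v
      obtain ⟨c, hc, hcv⟩ := hreach v
      by_cases hcb : c = b
      · exact ⟨a, Finset.mem_erase.mpr ⟨hne, ha⟩, hab.trans (hcb ▸ hcv)⟩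
      · exact ⟨c, Finset.mem_erase.mpr ⟨hcb, hc⟩, hcv⟩
    have h1 := hmin _ hcov
    have h2 := Finset.card_erase_lt_of_mem hb
    omega
  subst hW
  constructor
  · rintro x ⟨a, ha, hax, hxa⟩ y ⟨b, hb, hby, hyb⟩ hxy
    have hab : a = b :=
      key a ha b hb ((hax.trans (Relation.ReflTransGen.single hxy)).trans hyb)
    subst hab
    exact ⟨Relation.ReflTransGen.single hxy, hyb.trans hax⟩
  · rintro x hx y ⟨b, hb, hby, hyb⟩ hxy
    obtain ⟨a, ha, hax⟩ := hreach x
    have hab : a = b :=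
      key a ha b hb ((hax.trans (Relation.ReflTransGen.single hxy)).trans hyb)
    subst hab
    exact hx ⟨a, ha, hax, (Relation.ReflTransGen.single hxy).trans hyb⟩
end
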